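/- arXiv:2110.08171 — 2 statements merged into one kernel-verified Lean document; each statement's English description precedes it below -/
import Mathlib

section
/- Let p : Y → X be a holomorphic covering map of complex manifolds, A a connected compact Hausdorff space, and f_k : A → X a sequence of continuous maps converging uniformly (with respect to a fixed metric on X) to a continuous map f : A → X. Suppose each f_k admits a lift g_k : A → Y with p ∘ g_k = f_k, and suppose there is a point a₀ ∈ A such that g_k(a₀) converges in Y. Then f admits a lift g : A → Y with p ∘ g = f. -/
open Metric Topology Manifold Filter

noncomputable section

section CoveringAux

open Set

variable {X Y : Type*} [TopologicalSpace X] [TopologicalSpace Y]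

/-- A "good" open set for a covering map: open, preconnected, `p` is injective on
connected components of its preimage, and through every point of the preimage there
is a continuous section whose image stays in the component of that point. -/
def GoodSet (p : Y → X) (U : Set X) : Prop :=
  IsOpen U ∧ IsPreconnected U ∧
    (∀ y y' : Y, p y ∈ U → p y = p y' →
      connectedComponentIn (p ⁻¹' U) y = connectedComponentIn (p ⁻¹' U) y' → y = y') ∧
    ∀ y : Y, p y ∈ U → ∃ s : X → Y, ContinuousOn s U ∧ (∀ x ∈ U, p (s x) = x) ∧
      s (p y) = y ∧ ∀ x ∈ U, s x ∈ connectedComponentIn (p ⁻¹' U) y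

/-- Every point of the base of a covering map over a locally connected base has a good
neighbourhood. -/
theorem goodSet_nhd {p : Y → X} (hp : IsCoveringMap p) [LocallyConnectedSpace X] (x : X) :
    ∃ U, x ∈ U ∧ GoodSet p U := by
  rcases isEmpty_or_nonempty (p ⁻¹' {x}) with hne | hne
  · obtain ⟨-, U, hxU, hU, -, H, -⟩ := hp x
    refine ⟨connectedComponentIn U x, mem_connectedComponentIn hxU, hU.connectedComponentIn,
      isPreconnected_connectedComponentIn, ?_, ?_⟩
    · intro y y' hy
      exact (IsEmpty.false (H ⟨y, (connectedComponentIn_subset U x hy : p y ∈ U)⟩).2).elim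
    · intro y hy
      exact (IsEmpty.false (H ⟨y, (connectedComponentIn_subset U x hy : p y ∈ U)⟩).2).elim
  obtain ⟨hd, t, hxt⟩ : DiscreteTopology (p ⁻¹' {x}) ∧
      ∃ t : Bundle.Trivialization (p ⁻¹' {x}) p, x ∈ t.baseSet :=
    ⟨(hp x).1, (hp x).toTrivialization, (hp x).mem_toTrivialization_baseSet⟩
  set U := connectedComponentIn t.baseSet x with hUdef
  have hUsub : U ⊆ t.baseSet := connectedComponentIn_subset _ _
  have hUopen : IsOpen U := t.open_baseSet.connectedComponentIn
  have hUconn : IsPreconnected U := isPreconnected_connectedComponentIn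
  -- second coordinate of the trivialization is constant on components of the preimage
  have hsnd : ∀ y y' : Y, p y ∈ U → y' ∈ connectedComponentIn (p ⁻¹' U) y →
      (t y).2 = (t y').2 := by
    intro y y' hy hy'
    have hCsub : connectedComponentIn (p ⁻¹' U) y ⊆ p ⁻¹' U := connectedComponentIn_subset _ _
    have hcont : ContinuousOn (fun z => (t z).2) (p ⁻¹' U) := by
      have h1 : ContinuousOn (fun z : Y => t z) (p ⁻¹' U) :=
        t.toPartialHomeomorph.continuousOn.mono
          (by rw [show t.toPartialHomeomorph.source = p ⁻¹' t.baseSet from t.source_eq]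
              exact preimage_mono hUsub)
      exact continuous_snd.comp_continuousOn h1
    have himg : IsPreconnected ((fun z => (t z).2) '' connectedComponentIn (p ⁻¹' U) y) :=
      isPreconnected_connectedComponentIn.image _ (hcont.mono hCsub)
    haveI : TotallyDisconnectedSpace ↥(p ⁻¹' {x}) := inferInstance
    exact himg.subsingleton
      (mem_image_of_mem _ (mem_connectedComponentIn hy)) (mem_image_of_mem _ hy')
  refine ⟨U, mem_connectedComponentIn hxt, hUopen, hUconn, ?_, ?_⟩
  · -- injectivity on components
    intro y y' hy hpe hcomp
    have hy'U : p y' ∈ U := hpe ▸ hy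
    have hy'mem : y' ∈ connectedComponentIn (p ⁻¹' U) y := by
      rw [hcomp]; exact mem_connectedComponentIn hy'U
    have h2 := hsnd y y' hy hy'mem
    have h1 : (t y).1 = (t y').1 := by
      rw [t.coe_fst' (hUsub hy), t.coe_fst' (hUsub hy'U), hpe]
    have : t y = t y' := Prod.ext h1 h2
    exact t.toPartialHomeomorph.injOn (t.mem_source.2 (hUsub hy))
      (t.mem_source.2 (hUsub hy'U)) this
  · -- sections
    intro y hy
    set s : X → Y := fun x' => t.toPartialHomeomorph.symm (x', (t y).2) with hsdef
    have hsect : ∀ x' ∈ U, p (s x') = x' := fun x' hx' => t.proj_symm_apply' (hUsub hx')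
    have hscont : ContinuousOn s U := by
      refine (t.toPartialHomeomorph.continuousOn_symm.comp
        ((continuous_id.prodMk continuous_const).continuousOn) ?_)
      intro x' hx'
      exact t.mem_target.2 (hUsub hx')
    have hsy : s (p y) = y := by
      have h1 : ((p y : X), (t y).2) = t y := t.mk_proj_snd' (hUsub hy)
      rw [hsdef]; simp only
      rw [h1]
      exact t.toPartialHomeomorph.left_inv (t.mem_source.2 (hUsub hy))
    refine ⟨s, hscont, hsect, hsy, ?_⟩
    have hTconn : IsPreconnected (s '' U) := hUconn.image s hscont
    have hTsub : s '' U ⊆ p ⁻¹' U := by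
      rintro _ ⟨x', hx', rfl⟩
      simpa only [mem_preimage, hsect x' hx'] using hx'
    have hyT : y ∈ s '' U := ⟨p y, hy, hsy⟩
    intro x' hx'
    exact hTconn.subset_connectedComponentIn hyT hTsub ⟨x', hx', rfl⟩

/-- Consistency: whether two points over a pair of preconnected sets inside a common good
set lie in the same component of the preimage does not depend on the choice of the set. -/
theorem goodSet_transfer {p : Y → X} {U V V' : Set X} (hU : GoodSet p U)
    (hV' : IsPreconnected V') (hVU : V ⊆ U) (hV'U : V' ⊆ U)
    {y y' : Y} (hyV : p y ∈ V) (hy'V : p y' ∈ V) (hyV' : p y ∈ V') (hy'V' : p y' ∈ V')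
    (hyy' : y' ∈ connectedComponentIn (p ⁻¹' V) y) :
    y' ∈ connectedComponentIn (p ⁻¹' V') y := by
  obtain ⟨hUo, hUc, hinj, hsec⟩ := hU
  obtain ⟨s, hscont, hsp, hsy, hsmem⟩ := hsec y (hVU hyV)
  have hyU' : y' ∈ connectedComponentIn (p ⁻¹' U) y :=
    connectedComponentIn_mono y (preimage_mono hVU) hyy'
  have hy'eq : s (p y') = y' := by
    refine hinj (s (p y')) y' ?_ (hsp _ (hVU hy'V)) ?_
    · rw [hsp _ (hVU hy'V)]; exact hVU hy'V
    · have h1 : s (p y') ∈ connectedComponentIn (p ⁻¹' U) y := hsmem _ (hVU hy'V)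
      rw [← connectedComponentIn_eq h1, ← connectedComponentIn_eq hyU']
  have hTconn : IsPreconnected (s '' V') := hV'.image s (hscont.mono hV'U)
  have hTsub : s '' V' ⊆ p ⁻¹' V' := by
    rintro _ ⟨x', hx', rfl⟩
    simpa only [Set.mem_preimage, hsp x' (hV'U hx')] using hx'
  have hyT : y ∈ s '' V' := ⟨p y, hyV', hsy⟩
  exact hTconn.subset_connectedComponentIn hyT hTsub ⟨p y', hy'V', hy'eq⟩

end CoveringAux

/-- Uniform limits of liftable maps through a holomorphic covering map of complex
manifolds are liftable, given convergence of the lifts at one basepoint. -/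
theorem lift_of_uniform_limit
    {E F : Type*} [NormedAddCommGroup E] [NormedSpace ℂ E]
    [NormedAddCommGroup F] [NormedSpace ℂ F]
    {X Y : Type*} [MetricSpace X] [ChartedSpace E X]
    [TopologicalSpace Y] [ChartedSpace F Y]
    (p : Y → X) (hp : IsCoveringMap p) (hholo : MDifferentiable 𝓘(ℂ, F) 𝓘(ℂ, E) p)
    {A : Type*} [TopologicalSpace A] [ConnectedSpace A] [CompactSpace A] [T2Space A]
    (f : A → X) (hf : Continuous f)
    (fk : ℕ → A → X) (hfk : ∀ k, Continuous (fk k))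
    (hconv : TendstoUniformly fk f atTop)
    (g : ℕ → A → Y) (hg : ∀ k, Continuous (g k)) (hgl : ∀ k a, p (g k a) = fk k a)
    (a₀ : A) (y₀ : Y) (hy : Tendsto (fun k => g k a₀) atTop (𝓝 y₀)) :
    ∃ gl : A → Y, Continuous gl ∧ ∀ a, p (gl a) = f a := by
  classical
  haveI : NormedSpace ℝ E := NormedSpace.restrictScalars ℝ ℂ E
  haveI : NormedSpace ℝ F := NormedSpace.restrictScalars ℝ ℂ F
  haveI : LocallyConnectedSpace X := ChartedSpace.locallyConnectedSpace E X
  haveI : LocallyConnectedSpace Y := ChartedSpace.locallyConnectedSpace F Y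
  set K : Set X := Set.range f with hKdef
  have hK : IsCompact K := isCompact_range hf
  -- Lebesgue number for good sets
  obtain ⟨ρ, hρpos, hρ⟩ : ∃ ρ > 0, ∀ x ∈ K, ∃ U, GoodSet p U ∧ ball x ρ ⊆ U := by
    choose U hmemU hgood using goodSet_nhd hp
    obtain ⟨ρ, hρpos, hρ⟩ := lebesgue_number_lemma_of_metric (c := fun x : K => U x) hK
      (fun x => (hgood x).1) (fun x hx => Set.mem_iUnion.2 ⟨⟨x, hx⟩, hmemU x⟩)
    exact ⟨ρ, hρpos, fun x hx => by obtain ⟨i, hi⟩ := hρ x hx; exact ⟨U i, hgood i, hi⟩⟩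
  -- Lebesgue number for small connected sets
  obtain ⟨ε₀, hε₀pos, hε₀⟩ : ∃ ε₀ > 0, ∀ x ∈ K, ∃ z ∈ K,
      ball x ε₀ ⊆ connectedComponentIn (ball z (ρ / 4)) z := by
    obtain ⟨ε₀, hε₀pos, hε₀⟩ := lebesgue_number_lemma_of_metric
      (c := fun z : K => connectedComponentIn (ball (z : X) (ρ / 4)) (z : X)) hK
      (fun z => isOpen_ball.connectedComponentIn)
      (fun x hx => Set.mem_iUnion.2 ⟨⟨x, hx⟩,
        mem_connectedComponentIn (mem_ball_self (by linarith))⟩)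
    exact ⟨ε₀, hε₀pos, fun x hx => by
      obtain ⟨i, hi⟩ := hε₀ x hx; exact ⟨(i : X), i.2, hi⟩⟩
  set ε : ℝ := min (ε₀ / 2) (ρ / 8) with hεdef
  have hεpos : 0 < ε := lt_min (by linarith) (by linarith)
  have hε₁ : 2 * ε ≤ ε₀ := by
    have := min_le_left (ε₀ / 2) (ρ / 8); simp only [← hεdef] at this; linarith
  have hε₂ : ε ≤ ρ / 8 := min_le_right _ _
  -- choose the data for each point of A
  have hdata : ∀ a : A, ∃ z ∈ K, ball (f a) ε₀ ⊆ connectedComponentIn (ball z (ρ / 4)) z :=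
    fun a => hε₀ (f a) (Set.mem_range_self a)
  choose z hzK hzball using hdata
  set W : A → Set X := fun a => connectedComponentIn (ball (z a) (ρ / 4)) (z a) with hWdef
  have hWopen : ∀ a, IsOpen (W a) := fun a => isOpen_ball.connectedComponentIn
  have hWconn : ∀ a, IsPreconnected (W a) := fun a => isPreconnected_connectedComponentIn
  have hWball : ∀ a, W a ⊆ ball (z a) (ρ / 4) := fun a => connectedComponentIn_subset _ _
  have hfW : ∀ a, ball (f a) (2 * ε) ⊆ W a := fun a =>
    (ball_subset_ball hε₁).trans (hzball a)
  have hfaW : ∀ a, f a ∈ W a := fun a => hfW a (mem_ball_self (by linarith))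
  have hfz : ∀ a, dist (f a) (z a) < ρ / 4 := fun a => hWball a (hfaW a)
  choose Uu hUgood hUball using fun a => hρ (z a) (hzK a)
  have hWU : ∀ a, W a ⊆ Uu a := fun a =>
    (hWball a).trans ((ball_subset_ball (by linarith)).trans (hUball a))
  -- the key inclusion for nearby points
  have hWU' : ∀ a a', dist (f a) (f a') < ε → W a' ⊆ Uu a := by
    intro a a' hd
    refine (hWball a').trans (fun w hw => hUball a ?_)
    have h1 : dist (f a') (z a') < ρ / 4 := hfz a'
    have h2 : dist (f a) (z a) < ρ / 4 := hfz a
    have : dist w (z a) ≤ dist w (z a') + dist (z a') (f a') + dist (f a') (f a)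
        + dist (f a) (z a) := by
      calc dist w (z a) ≤ dist w (f a) + dist (f a) (z a) := dist_triangle _ _ _
        _ ≤ (dist w (f a') + dist (f a') (f a)) + dist (f a) (z a) := by
            have := dist_triangle w (f a') (f a); linarith
        _ ≤ (dist w (z a') + dist (z a') (f a') + dist (f a') (f a)) + dist (f a) (z a) := by
            have := dist_triangle w (z a') (f a')
            have h3 : dist (z a') (f a') = dist (f a') (z a') := dist_comm _ _
            linarith
        _ = _ := by ring
    have hd' : dist (f a') (f a) < ε := by rw [dist_comm]; exact hd
    have hw' : dist w (z a') < ρ / 4 := hw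
    have h4 : dist (z a') (f a') < ρ / 4 := by rw [dist_comm]; exact h1
    simp only [mem_ball]
    linarith [hε₂]
  -- choose k₀ with fk k₀ uniformly ε-close to f
  obtain ⟨k₀, hk₀⟩ : ∃ k₀, ∀ a, dist (f a) (fk k₀ a) < ε := by
    have := (Metric.tendstoUniformly_iff.1 hconv) ε hεpos
    exact this.exists
  set h : A → Y := fun a => g k₀ a with hhdef
  have hhc : Continuous h := hg k₀
  have hph : ∀ a, p (h a) = fk k₀ a := fun a => hgl k₀ a
  have hphW : ∀ a, p (h a) ∈ W a := by
    intro a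
    rw [hph a]
    exact hfW a (by simp only [mem_ball]; rw [dist_comm]; linarith [hk₀ a])
  have hphU : ∀ a, p (h a) ∈ Uu a := fun a => hWU a (hphW a)
  -- choose sections through h a
  choose s hscont hsp hsh hsmem using fun a => (hUgood a).2.2.2 (h a) (hphU a)
  set gl : A → Y := fun a => s a (f a) with hgldef
  have hfaU : ∀ a, f a ∈ Uu a := fun a => hWU a (hfaW a)
  have hpgl : ∀ a, p (gl a) = f a := fun a => hsp a (f a) (hfaU a)
  refine ⟨gl, ?_, hpgl⟩
  rw [continuous_iff_continuousAt]
  intro a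
  -- the neighbourhood where gl agrees with s a ∘ f
  set C : Set Y := connectedComponentIn (p ⁻¹' W a) (h a) with hCdef
  have hCopen : IsOpen C := ((hWopen a).preimage hp.continuous).connectedComponentIn
  have hN : IsOpen (f ⁻¹' ball (f a) ε ∩ h ⁻¹' C) :=
    (isOpen_ball.preimage hf).inter (hCopen.preimage hhc)
  have haN : a ∈ f ⁻¹' ball (f a) ε ∩ h ⁻¹' C :=
    ⟨mem_ball_self hεpos, mem_connectedComponentIn (hphW a)⟩
  have hkey : ∀ a' ∈ f ⁻¹' ball (f a) ε ∩ h ⁻¹' C, gl a' = s a (f a') := by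
    rintro a' ⟨ha'1, ha'2⟩
    have hdist : dist (f a') (f a) < ε := ha'1
    have hdist' : dist (f a) (f a') < ε := by rw [dist_comm]; exact hdist
    -- memberships of the relevant base points
    have hfa'Wa' : f a' ∈ W a' := hfaW a'
    have hfa'Wa : f a' ∈ W a := hfW a (by simp only [mem_ball]; linarith)
    have hpha'Wa' : p (h a') ∈ W a' := hphW a'
    have hpha'Wa : p (h a') ∈ W a := by
      rw [hph a']
      refine hfW a ?_
      simp only [mem_ball]
      calc dist (fk k₀ a') (f a) ≤ dist (fk k₀ a') (f a') + dist (f a') (f a) :=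
            dist_triangle _ _ _
        _ < 2 * ε := by have := hk₀ a'; rw [dist_comm] at this; linarith
    -- s a' (f a') lies in the component of h a' over W a'
    have hstep1 : s a' (f a') ∈ connectedComponentIn (p ⁻¹' W a') (h a') := by
      have hconn : IsPreconnected (s a' '' W a') :=
        (hWconn a').image _ ((hscont a').mono (hWU a'))
      have hsub : s a' '' W a' ⊆ p ⁻¹' W a' := by
        rintro _ ⟨x', hx', rfl⟩
        simpa only [Set.mem_preimage, hsp a' x' (hWU a' hx')] using hx'
      have hmem : h a' ∈ s a' '' W a' := ⟨p (h a'), hpha'Wa', hsh a'⟩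
      exact hconn.subset_connectedComponentIn hmem hsub ⟨f a', hfa'Wa', rfl⟩
    -- transfer to W a using the good set Uu a
    have hstep2 : s a' (f a') ∈ connectedComponentIn (p ⁻¹' W a) (h a') :=
      goodSet_transfer (hUgood a) (hWconn a) (hWU' a a' hdist') (hWU a)
        hpha'Wa' (by rw [hsp a' (f a') (hWU a' hfa'Wa')]; exact hfa'Wa')
        hpha'Wa (by rw [hsp a' (f a') (hWU a' hfa'Wa')]; exact hfa'Wa) hstep1
    -- hence s a' (f a') ∈ C
    have hCa' : connectedComponentIn (p ⁻¹' W a) (h a') = C := by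
      rw [hCdef]
      exact (connectedComponentIn_eq ha'2).symm
    rw [hCa'] at hstep2
    -- s a (f a') also lies over f a' in the component of h a in Uu a
    have h1 : s a' (f a') ∈ connectedComponentIn (p ⁻¹' Uu a) (h a) :=
      connectedComponentIn_mono _ (Set.preimage_mono (hWU a)) hstep2
    have h2 : s a (f a') ∈ connectedComponentIn (p ⁻¹' Uu a) (h a) :=
      hsmem a (f a') (hWU a hfa'Wa)
    -- injectivity on components of the good set
    have hinj := (hUgood a).2.2.1
    show s a' (f a') = s a (f a')
    refine hinj (s a' (f a')) (s a (f a')) ?_ ?_ ?_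
    · rw [hsp a' (f a') (hWU a' hfa'Wa')]; exact hWU a hfa'Wa
    · rw [hsp a' (f a') (hWU a' hfa'Wa'), hsp a (f a') (hWU a hfa'Wa)]
    · rw [← connectedComponentIn_eq h1, ← connectedComponentIn_eq h2]
  -- conclude continuity at a
  have hcongr : gl =ᶠ[𝓝 a] fun a' => s a (f a') :=
    Filter.eventuallyEq_of_mem (hN.mem_nhds haN) hkey
  refine ContinuousAt.congr ?_ hcongr.symm
  have htend : Filter.Tendsto f (𝓝 a) (𝓝[Uu a] (f a)) := by
    rw [tendsto_nhdsWithin_iff]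
    refine ⟨hf.continuousAt, ?_⟩
    filter_upwards [hf.continuousAt.preimage_mem_nhds
      (isOpen_ball.mem_nhds (mem_ball_self hεpos))] with a' ha'
    exact hWU a (hfW a (ball_subset_ball (by linarith) ha'))
  exact Filter.Tendsto.comp ((hscont a).continuousWithinAt (hfaU a)) htend
end
end

section
/- Let p : S' → S be a covering map of Riemann surfaces (no branching), A a connected, locally connected compact metric space, a₀ ∈ A, and f, f_k : A → S continuous with f_k → f uniformly. If each f_k lifts to f'_k : A → S' and f'_k(a₀) = y₀ for a fixed y₀ ∈ S' for all k, then f lifts to f' : A → S' with f'(a₀) = y₀. -/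
open Metric Topology Manifold Filter

noncomputable section

/-- Two local sections of a covering map through the same point agree on a preconnected
set contained in both trivialized base sets. -/
theorem section_agree_of_isCoveringMap {S S' : Type*} [TopologicalSpace S] [TopologicalSpace S']
    {p : S' → S} (hp : IsCoveringMap p) {F F' : Type*} [TopologicalSpace F] [TopologicalSpace F']
    (t : Bundle.Trivialization F p) (t' : Bundle.Trivialization F' p)
    {D : Set S} (hD : IsPreconnected D) (hDt : D ⊆ t.baseSet) (hDt' : D ⊆ t'.baseSet)
    {y : S'} (hy : p y ∈ D) {x : S} (hx : x ∈ D) :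
    t.toOpenPartialHomeomorph.symm (x, (t y).2) = t'.toOpenPartialHomeomorph.symm (x, (t' y).2) := by
  set σ₁ : S → S' := fun z => t.toOpenPartialHomeomorph.symm (z, (t y).2) with hσ₁
  set σ₂ : S → S' := fun z => t'.toOpenPartialHomeomorph.symm (z, (t' y).2) with hσ₂
  have hc₁ : ContinuousOn σ₁ D := by
    refine t.toOpenPartialHomeomorph.continuousOn_symm.comp
      ((continuous_id.prodMk continuous_const).continuousOn) ?_
    intro z hz
    exact t.mem_target.mpr (hDt hz)
  have hc₂ : ContinuousOn σ₂ D := by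
    refine t'.toOpenPartialHomeomorph.continuousOn_symm.comp
      ((continuous_id.prodMk continuous_const).continuousOn) ?_
    intro z hz
    exact t'.mem_target.mpr (hDt' hz)
  have hp₁ : ∀ z ∈ D, p (σ₁ z) = z := fun z hz =>
    t.proj_symm_apply (t.mem_target.mpr (hDt hz))
  have hp₂ : ∀ z ∈ D, p (σ₂ z) = z := fun z hz =>
    t'.proj_symm_apply (t'.mem_target.mpr (hDt' hz))
  have hy₁ : σ₁ (p y) = y := t.symm_apply_mk_proj (t.mem_source.mpr (hDt hy))
  have hy₂ : σ₂ (p y) = y := t'.symm_apply_mk_proj (t'.mem_source.mpr (hDt' hy))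
  exact hp.eqOn_of_comp_eqOn hD hc₁ hc₂
    (fun z hz => (hp₁ z hz).trans (hp₂ z hz).symm) hy (hy₁.trans hy₂.symm) hx

/-- Convergence of lifts: a uniform limit of maps liftable through a covering map of
Riemann surfaces, with lifts all taking the value `y₀` at `a₀`, is itself liftable with
the same basepoint value. -/
theorem lift_of_uniform_limit_with_basepoint
    {S S' : Type*} [MetricSpace S] [ChartedSpace ℂ S]
    [TopologicalSpace S'] [ChartedSpace ℂ S']
    (p : S' → S) (hp : IsCoveringMap p) (hholo : MDifferentiable 𝓘(ℂ) 𝓘(ℂ) p)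
    {A : Type*} [MetricSpace A] [CompactSpace A] [ConnectedSpace A]
    [LocallyConnectedSpace A]
    (a₀ : A) (y₀ : S')
    (f : A → S) (hf : Continuous f)
    (fk : ℕ → A → S) (hfk : ∀ k, Continuous (fk k))
    (hconv : TendstoUniformly fk f atTop)
    (f' : ℕ → A → S') (hf' : ∀ k, Continuous (f' k))
    (hfl : ∀ k a, p (f' k a) = fk k a) (hbase : ∀ k, f' k a₀ = y₀) :
    ∃ g : A → S', Continuous g ∧ (∀ a, p (g a) = f a) ∧ g a₀ = y₀ := by
  classical
  have _instS : LocallyConnectedSpace S := ChartedSpace.locallyConnectedSpace ℂ S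
  -- trivializations and connected evenly covered neighborhoods
  have hrange : ∀ a, Nonempty (p ⁻¹' {f a}) := fun a => by
    by_contra hne
    rw [not_nonempty_iff] at hne
    obtain ⟨_, U, hxU, hU, -, H, -⟩ := hp (f a)
    have h1 : ∀ᶠ j in atTop, fk j a ∈ U := (hconv.tendsto_at a).eventually (hU.mem_nhds hxU)
    obtain ⟨j, hj⟩ := h1.exists
    haveI := hne
    exact isEmptyElim (H ⟨f' j a, by rw [Set.mem_preimage, hfl]; exact hj⟩).2
  let r : S → S := fun s => if Nonempty (p ⁻¹' {s}) then s else p y₀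
  have hne : ∀ s, Nonempty (p ⁻¹' {r s}) := fun s => by
    dsimp only [r]
    split_ifs with h
    exacts [h, ⟨⟨y₀, rfl⟩⟩]
  let T : ∀ s : S, Bundle.Trivialization (p ⁻¹' {r s}) p := fun s =>
    haveI := hne s; (hp (r s)).toTrivialization
  let C : S → Set S := fun s => connectedComponentIn (T s).baseSet (r s)
  have hCopen : ∀ s, IsOpen (C s) := fun s => (T s).open_baseSet.connectedComponentIn
  have hCsub : ∀ s, C s ⊆ (T s).baseSet := fun s => connectedComponentIn_subset _ _
  have hCmem : ∀ s, r s ∈ C s := fun s =>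
    haveI := hne s; mem_connectedComponentIn ((hp (r s)).mem_toTrivialization_baseSet)
  have hKc : IsCompact (Set.range f) := isCompact_range hf
  obtain ⟨δ₁, hδ₁, H₁⟩ := lebesgue_number_lemma_of_metric hKc hCopen
    (fun x hx => Set.mem_iUnion.mpr ⟨x, by
      obtain ⟨a, ha⟩ := hx
      have h := hCmem x
      rwa [show r x = x from if_pos (by rw [← ha]; exact hrange a)] at h⟩)
  -- small connected sets
  let D : S → Set S := fun s => connectedComponentIn (ball s (δ₁ / 4)) s
  have hDopen : ∀ s, IsOpen (D s) := fun s => isOpen_ball.connectedComponentIn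
  have hDsub : ∀ s, D s ⊆ ball s (δ₁ / 4) := fun s => connectedComponentIn_subset _ _
  have hDmem : ∀ s, s ∈ D s := fun s => mem_connectedComponentIn (mem_ball_self (by linarith))
  obtain ⟨δ₂', hδ₂'pos, H₂⟩ := lebesgue_number_lemma_of_metric hKc hDopen
    (fun x _ => Set.mem_iUnion.mpr ⟨x, hDmem x⟩)
  set δ₂ := min δ₂' δ₁ with hδ₂def
  have hδ₂ : 0 < δ₂ := lt_min hδ₂'pos hδ₁
  have hδ₂le : δ₂ ≤ δ₁ := min_le_right _ _
  have H₂' : ∀ x ∈ Set.range f, ∃ s, ball x δ₂ ⊆ D s := fun x hx =>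
    (H₂ x hx).imp fun s hs => (ball_subset_ball (min_le_left _ _)).trans hs
  -- pick k with fk k uniformly δ₂/2-close to f
  obtain ⟨k, hk⟩ : ∃ k, ∀ a, dist (f a) (fk k a) < δ₂ / 2 :=
    (Metric.tendstoUniformly_iff.mp hconv (δ₂ / 2) (by linarith)).exists
  -- choose evenly covered connected neighborhood around each value of f
  have hsel : ∀ a : A, ∃ s : S, ball (f a) δ₁ ⊆ C s := fun a => H₁ (f a) ⟨a, rfl⟩
  choose c hc using hsel
  have hfa_mem : ∀ a : A, f a ∈ C (c a) := fun a => hc a (mem_ball_self hδ₁)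
  have hfk_ball : ∀ a : A, fk k a ∈ ball (f a) δ₁ := fun a =>
    mem_ball'.mpr ((hk a).trans_le (by linarith))
  have hfk_mem : ∀ a : A, fk k a ∈ C (c a) := fun a => hc a (hfk_ball a)
  have hsrc : ∀ a : A, f' k a ∈ (T (c a)).source := fun a =>
    (T (c a)).mem_source.mpr (by rw [hfl]; exact hCsub _ (hfk_mem a))
  -- the candidate lift
  set g : A → S' := fun a =>
    (T (c a)).toOpenPartialHomeomorph.symm (f a, ((T (c a)) (f' k a)).2) with hg
  have hpg : ∀ a, p (g a) = f a := fun a =>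
    (T (c a)).proj_symm_apply ((T (c a)).mem_target.mpr (hCsub _ (hfa_mem a)))
  -- basepoint
  have hfk_a₀ : ∀ j, fk j a₀ = p y₀ := fun j => by rw [← hfl j a₀, hbase j]
  have hfa₀ : f a₀ = p y₀ := by
    have h1 : Tendsto (fun j => fk j a₀) atTop (𝓝 (f a₀)) := hconv.tendsto_at a₀
    have h2 : (fun j => fk j a₀) = fun _ => p y₀ := funext hfk_a₀
    rw [h2] at h1
    exact (tendsto_nhds_unique tendsto_const_nhds h1).symm
  have hbase' : g a₀ = y₀ := by
    have hy₀src : y₀ ∈ (T (c a₀)).source := by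
      rw [← hbase k]; exact hsrc a₀
    have : g a₀ = (T (c a₀)).toOpenPartialHomeomorph.symm (p y₀, ((T (c a₀)) y₀).2) := by
      rw [hg]; simp only [hbase k, hfa₀]
    rw [this]
    exact (T (c a₀)).symm_apply_mk_proj hy₀src
  -- continuity
  have hcont : Continuous g := by
    rw [continuous_iff_continuousAt]
    intro b
    obtain ⟨y, hy⟩ := H₂' (f b) ⟨b, rfl⟩
    set O : Set A := f ⁻¹' ball (f b) (δ₂ / 2) with hO
    have hOopen : IsOpen O := isOpen_ball.preimage hf
    have hbO : b ∈ O := by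
      simp only [hO, Set.mem_preimage]; exact mem_ball_self (by linarith)
    have hfbD : f b ∈ D y := hy (mem_ball_self hδ₂)
    have hyfb : dist (f b) y < δ₁ / 4 := hDsub y hfbD
    have hfaD : ∀ a ∈ O, f a ∈ D y := fun a ha =>
      hy (by
        have : dist (f a) (f b) < δ₂ / 2 := ha
        exact mem_ball.mpr (by linarith))
    have hfkD : ∀ a ∈ O, fk k a ∈ D y := fun a ha =>
      hy (by
        have h1 : dist (f a) (f b) < δ₂ / 2 := ha
        have h2 : dist (f a) (fk k a) < δ₂ / 2 := hk a
        have := dist_triangle (fk k a) (f a) (f b)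
        rw [dist_comm (fk k a) (f a)] at this
        exact mem_ball.mpr (by linarith))
    have hDCb : D y ⊆ C (c b) := fun z hz => by
      have h1 : dist z y < δ₁ / 4 := hDsub y hz
      have := dist_triangle z y (f b)
      rw [dist_comm y (f b)] at this
      exact hc b (mem_ball.mpr (by linarith))
    have hDCa : ∀ a ∈ O, D y ⊆ C (c a) := fun a ha z hz => by
      have h1 : dist z y < δ₁ / 4 := hDsub y hz
      have h2 : dist (f a) (f b) < δ₂ / 2 := ha
      have t1 := dist_triangle z y (f b)
      have t2 := dist_triangle z (f b) (f a)
      rw [dist_comm y (f b)] at t1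
      rw [dist_comm (f b) (f a)] at t2
      exact hc a (mem_ball.mpr (by linarith))
    -- the local comparison function using a fixed trivialization
    set h : A → S' := fun a =>
      (T (c b)).toOpenPartialHomeomorph.symm (f a, ((T (c b)) (f' k a)).2) with hh
    have hkey : ∀ a ∈ O, g a = h a := fun a ha => by
      have hyD : p (f' k a) ∈ D y := by rw [hfl]; exact hfkD a ha
      exact section_agree_of_isCoveringMap hp (T (c a)) (T (c b))
        isPreconnected_connectedComponentIn
        ((hDCa a ha).trans (hCsub _)) (hDCb.trans (hCsub _)) hyD (hfaD a ha)
    have hsrcb : ∀ a ∈ O, f' k a ∈ (T (c b)).source := fun a ha =>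
      (T (c b)).mem_source.mpr (by rw [hfl]; exact hCsub _ (hDCb (hfkD a ha)))
    have hcont_h : ContinuousOn h O := by
      refine (T (c b)).toOpenPartialHomeomorph.continuousOn_symm.comp ?_ ?_
      · refine ContinuousOn.prodMk hf.continuousOn ?_
        refine ContinuousOn.snd ?_
        exact (T (c b)).toOpenPartialHomeomorph.continuousOn.comp (hf' k).continuousOn hsrcb
      · intro a ha
        exact (T (c b)).mem_target.mpr (hCsub _ (hDCb (hfaD a ha)))
    have hch : ContinuousAt h b := hcont_h.continuousAt (hOopen.mem_nhds hbO)
    exact hch.congr (Filter.eventuallyEq_of_mem (hOopen.mem_nhds hbO)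
      (fun a ha => (hkey a ha).symm))
  exact ⟨g, hcont, hpg, hbase'⟩
end
end
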